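/- For the forward process with N modalities, z_t | z_0, X ~ N(√(ᾱ_t) z_0 + Σ_{i=1}^N α̃_t^{(i)} E_i(x_i), (1-ᾱ_t)I), where each α̃_t^{(i)} satisfies α̃_0^{(i)} = 0 and α̃_t^{(i)} = √(α_t)(w_t^{(i)} + α̃_{t-1}^{(i)}); equivalently, the multi-encoder marginal follows from the single-encoder case applied to the aggregate E(X) = Σ_i (w_t^{(i)}/w_t^{(1)})·E_i(x_i) when the weight ratios w_t^{(i)}/w_t^{(1)} are constant in t. -/

import Mathlib

open MeasureTheory ProbabilityTheory Finset
open scoped NNReal ENNReal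

/-- Isotropic Gaussian measure on `ℝ^d` with mean `m` and variance `v` in each coordinate. -/
noncomputable def gaussianVec (d : ℕ) (m : Fin d → ℝ) (v : ℝ≥0) :
    Measure (Fin d → ℝ) :=
  Measure.pi fun i => gaussianReal (m i) v

set_option linter.unusedSectionVars false

lemma mapWD {α β : Type*} [MeasurableSpace α] [MeasurableSpace β] (e : α ≃ᵐ β)
    (μ : Measure α) (f : β → ℝ≥0∞) (hf : Measurable f) :
    (μ.withDensity (f ∘ e)).map e = (μ.map e).withDensity f := by
  ext s hs
  rw [Measure.map_apply e.measurable hs, withDensity_apply _ (e.measurable hs),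
    withDensity_apply _ hs, setLIntegral_map hs hf e.measurable]
  rfl

lemma gauss_prod :
    (gaussianReal 0 1).prod (gaussianReal 0 1)
      = ((volume : Measure ℝ).prod volume).withDensity
          (fun p => gaussianPDF 0 1 p.1 * gaussianPDF 0 1 p.2) := by
  refine Measure.prod_eq fun s t hs ht => ?_
  rw [withDensity_apply _ (hs.prod ht), ← Measure.prod_restrict,
    lintegral_prod_mul (measurable_gaussianPDF 0 1).aemeasurable
      (measurable_gaussianPDF 0 1).aemeasurable,
    gaussianReal_apply _ one_ne_zero s, gaussianReal_apply _ one_ne_zero t]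

section rot
variable (a b : ℝ) (h : a^2 + b^2 = 1)

noncomputable def rotL (a b : ℝ) : (ℝ × ℝ) →ₗ[ℝ] (ℝ × ℝ) :=
  Matrix.toLin (Module.Basis.finTwoProd ℝ) (Module.Basis.finTwoProd ℝ) !![a, b; -b, a]

lemma rotL_apply (p : ℝ × ℝ) : rotL a b p = (a * p.1 + b * p.2, -b * p.1 + a * p.2) :=
  Matrix.toLin_finTwoProd_apply a b (-b) a p

lemma rotL_det : LinearMap.det (rotL a b) = a^2 + b^2 := by
  rw [rotL, LinearMap.det_toLin, Matrix.det_fin_two_of]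
  ring

include h in
lemma rotL_map_volume :
    ((volume : Measure ℝ).prod volume).map (rotL a b) = (volume : Measure ℝ).prod volume := by
  have hd : LinearMap.det (rotL a b) ≠ 0 := by rw [rotL_det]; rw [h]; norm_num
  have := Measure.map_linearMap_addHaar_eq_smul_addHaar
    (μ := (volume : Measure ℝ).prod volume) (f := rotL a b) hd
  rw [this, rotL_det, h]
  norm_num

/-- the rotation as a measurable equiv -/
noncomputable def rotE (a b : ℝ) (h : a^2 + b^2 = 1) : (ℝ × ℝ) ≃ᵐ (ℝ × ℝ) where
  toFun := fun p => (a * p.1 + b * p.2, -b * p.1 + a * p.2)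
  invFun := fun q => (a * q.1 - b * q.2, b * q.1 + a * q.2)
  left_inv := fun p => by
    ext
    · show a * (a * p.1 + b * p.2) - b * (-b * p.1 + a * p.2) = p.1
      linear_combination p.1 * h
    · show b * (a * p.1 + b * p.2) + a * (-b * p.1 + a * p.2) = p.2
      linear_combination p.2 * h
  right_inv := fun q => by
    ext
    · show a * (a * q.1 - b * q.2) + b * (b * q.1 + a * q.2) = q.1
      linear_combination q.1 * h
    · show -b * (a * q.1 - b * q.2) + a * (b * q.1 + a * q.2) = q.2
      linear_combination q.2 * h
  measurable_toFun :=
    show Measurable fun p : ℝ × ℝ => (a * p.1 + b * p.2, -b * p.1 + a * p.2) by fun_prop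
  measurable_invFun :=
    show Measurable fun q : ℝ × ℝ => (a * q.1 - b * q.2, b * q.1 + a * q.2) by fun_prop
end rot

lemma gaussianPDFReal_std_mul (x y : ℝ) :
    gaussianPDFReal 0 1 x * gaussianPDFReal 0 1 y
      = ((Real.sqrt (2 * Real.pi))⁻¹)^2 * Real.exp (-(x^2 + y^2)/2) := by
  simp only [gaussianPDFReal, NNReal.coe_one, mul_one, sub_zero]
  rw [mul_mul_mul_comm, ← Real.exp_add]
  ring_nf

lemma density_rot (a b : ℝ) (h : a^2 + b^2 = 1) (p : ℝ × ℝ) :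
    gaussianPDF 0 1 (a * p.1 + b * p.2) * gaussianPDF 0 1 (-b * p.1 + a * p.2)
      = gaussianPDF 0 1 p.1 * gaussianPDF 0 1 p.2 := by
  simp only [gaussianPDF]
  rw [← ENNReal.ofReal_mul (gaussianPDFReal_nonneg _ _ _),
    ← ENNReal.ofReal_mul (gaussianPDFReal_nonneg _ _ _)]
  congr 1
  rw [gaussianPDFReal_std_mul, gaussianPDFReal_std_mul]
  congr 2
  linear_combination (- p.1^2 / 2 - p.2^2 / 2) * h

lemma rot_invariant (a b : ℝ) (h : a^2 + b^2 = 1) :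
    ((gaussianReal 0 1).prod (gaussianReal 0 1)).map (rotE a b h)
      = (gaussianReal 0 1).prod (gaussianReal 0 1) := by
  set ρ : ℝ × ℝ → ℝ≥0∞ := fun p => gaussianPDF 0 1 p.1 * gaussianPDF 0 1 p.2 with hρdef
  have hρ : Measurable ρ :=
    ((measurable_gaussianPDF 0 1).comp measurable_fst).mul
      ((measurable_gaussianPDF 0 1).comp measurable_snd)
  have hcomp : ρ ∘ (rotE a b h) = ρ := funext fun p => density_rot a b h p
  have hvol : ((volume : Measure ℝ).prod volume).map (rotE a b h)
      = (volume : Measure ℝ).prod volume := by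
    have hc : ⇑(rotE a b h) = ⇑(rotL a b) := funext fun p => (rotL_apply a b p).symm
    rw [hc, rotL_map_volume a b h]
  rw [gauss_prod, ← hρdef, ← hcomp, mapWD (rotE a b h) _ ρ hρ, hvol, hcomp]

lemma std_comb (a b : ℝ) (h : a^2 + b^2 = 1) :
    ((gaussianReal 0 1).prod (gaussianReal 0 1)).map (fun p : ℝ × ℝ => a * p.1 + b * p.2)
      = gaussianReal 0 1 := by
  have hfun : (fun p : ℝ × ℝ => a * p.1 + b * p.2) = Prod.fst ∘ ⇑(rotE a b h) := rfl
  rw [hfun, ← Measure.map_map measurable_fst (rotE a b h).measurable, rot_invariant,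
    Measure.map_fst_prod, measure_univ, one_smul]

lemma comb (a b : ℝ) :
    ((gaussianReal 0 1).prod (gaussianReal 0 1)).map (fun p : ℝ × ℝ => a * p.1 + b * p.2)
      = gaussianReal 0 ⟨a^2 + b^2, by positivity⟩ := by
  by_cases h0 : a^2 + b^2 = 0
  · have ha : a = 0 := by nlinarith [sq_nonneg a, sq_nonneg b]
    have hb : b = 0 := by nlinarith [sq_nonneg a, sq_nonneg b]
    subst ha hb
    have hv : @Eq ℝ≥0 ⟨(0:ℝ)^2 + 0^2, by positivity⟩ 0 := by ext; simp; rfl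
    rw [hv, gaussianReal_zero_var]
    simp only [zero_mul, add_zero]
    rw [Measure.map_const, measure_univ, one_smul]
  · set r : ℝ := Real.sqrt (a^2 + b^2) with hr
    have hsq : r^2 = a^2 + b^2 := Real.sq_sqrt (by positivity)
    have hrpos : 0 < r := Real.sqrt_pos.2 (lt_of_le_of_ne (by positivity) (Ne.symm h0))
    have h1 : (a/r)^2 + (b/r)^2 = 1 := by field_simp [hsq]; linarith
    have hfun : (fun p : ℝ × ℝ => a * p.1 + b * p.2)
        = (fun x => r * x) ∘ (fun p : ℝ × ℝ => (a/r) * p.1 + (b/r) * p.2) := by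
      funext p
      simp only [Function.comp_apply]
      field_simp
    rw [hfun, ← Measure.map_map (by fun_prop : Measurable fun x : ℝ => r * x) (by fun_prop),
      std_comb _ _ h1, gaussianReal_map_const_mul, mul_zero]
    congr 1
    ext
    simp [hsq]
    rfl

lemma oneDim (m : ℝ) (v : ℝ≥0) (a b c : ℝ) :
    ((gaussianReal m v).prod (gaussianReal 0 1)).map (fun p : ℝ × ℝ => a * p.1 + c + b * p.2)
      = gaussianReal (a * m + c) (⟨a^2, sq_nonneg a⟩ * v + ⟨b^2, sq_nonneg b⟩) := by
  have hg : gaussianReal m v = (gaussianReal 0 1).map (fun x => Real.sqrt v * x + m) := by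
    have h1 : (fun x : ℝ => Real.sqrt v * x + m) = (fun x => x + m) ∘ (fun x => Real.sqrt v * x) := rfl
    rw [h1, ← Measure.map_map (by fun_prop) (by fun_prop), gaussianReal_map_const_mul,
      gaussianReal_map_add_const, mul_zero, zero_add]
    congr 1
    ext
    simp [Real.sq_sqrt (NNReal.coe_nonneg v)]
  conv_lhs => rw [hg, show gaussianReal 0 1 = (gaussianReal 0 1).map id from (Measure.map_id).symm]
  rw [Measure.map_prod_map _ _ (by fun_prop) measurable_id, Measure.map_id,
    Measure.map_map (f := Prod.map (fun x => Real.sqrt v * x + m) id)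
      (g := fun p : ℝ × ℝ => a * p.1 + c + b * p.2) (by fun_prop) (by fun_prop)]
  have hfun : ((fun p : ℝ × ℝ => a * p.1 + c + b * p.2)
        ∘ Prod.map (fun x => Real.sqrt v * x + m) id)
      = (fun x => x + (a * m + c)) ∘ (fun p : ℝ × ℝ => (a * Real.sqrt v) * p.1 + b * p.2) := by
    funext p
    simp only [Function.comp_apply, Prod.map_apply, id_eq, Prod.fst, Prod.snd]
    cases p
    simp only [Prod.map_apply, id_eq]
    ring
  rw [hfun, ← Measure.map_map (by fun_prop) (by fun_prop), comb]
  erw [gaussianReal_map_add_const]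
  rw [
    zero_add]
  congr 1
  ext
  change (a * √↑v)^2 + b^2 = a^2 * (v:ℝ) + b^2
  rw [mul_pow, Real.sq_sqrt (NNReal.coe_nonneg v)]

lemma pi_dirac {d : ℕ} (x : Fin d → ℝ) :
    Measure.pi (fun i => Measure.dirac (x i)) = Measure.dirac x := by
  classical
  refine Measure.pi_eq fun s hs => ?_
  rw [Measure.dirac_apply' _ (MeasurableSet.univ_pi hs)]
  simp only [Set.indicator_apply, Set.mem_univ_pi, Pi.one_apply]
  rw [Finset.prod_congr rfl (fun i _ => Measure.dirac_apply' _ (hs i))]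
  simp only [Set.indicator_apply, Pi.one_apply]
  rw [Finset.prod_boole]
  simp

lemma vecStep (d : ℕ) (m : Fin d → ℝ) (v : ℝ≥0) (a b : ℝ) (C : Fin d → ℝ) :
    ((gaussianVec d m v).prod (gaussianVec d 0 1)).map
        (fun p : (Fin d → ℝ) × (Fin d → ℝ) => fun i => a * p.1 i + C i + b * p.2 i)
      = gaussianVec d (fun i => a * m i + C i) (⟨a^2, sq_nonneg a⟩ * v + ⟨b^2, sq_nonneg b⟩) := by
  have h1 : MeasurePreserving (MeasurableEquiv.arrowProdEquivProdArrow ℝ ℝ (Fin d)).symm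
      ((gaussianVec d m v).prod (gaussianVec d 0 1))
      (Measure.pi fun i => (gaussianReal (m i) v).prod (gaussianReal 0 1)) := by
    have := (measurePreserving_arrowProdEquivProdArrow ℝ ℝ (Fin d)
      (fun i => gaussianReal (m i) v) (fun i => gaussianReal 0 1)).symm
    simpa [gaussianVec] using this
  have h2 : MeasurePreserving (fun (q : Fin d → ℝ × ℝ) (i : Fin d) =>
        a * (q i).1 + C i + b * (q i).2)
      (Measure.pi fun i => (gaussianReal (m i) v).prod (gaussianReal 0 1))
      (Measure.pi fun i => gaussianReal (a * m i + C i)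
        (⟨a^2, sq_nonneg a⟩ * v + ⟨b^2, sq_nonneg b⟩)) := by
    refine measurePreserving_pi _ _ (fun i => ⟨by fun_prop, oneDim (m i) v a b (C i)⟩)
  have hcomp : (fun p : (Fin d → ℝ) × (Fin d → ℝ) => fun i => a * p.1 i + C i + b * p.2 i)
      = (fun (q : Fin d → ℝ × ℝ) (i : Fin d) => a * (q i).1 + C i + b * (q i).2)
        ∘ (MeasurableEquiv.arrowProdEquivProdArrow ℝ ℝ (Fin d)).symm := rfl
  rw [hcomp, ← Measure.map_map h2.measurable (MeasurableEquiv.measurable _), h1.map_eq, h2.map_eq]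
  rfl

section main

variable {Ω : Type*} [MeasurableSpace Ω] (μ : Measure Ω) [IsProbabilityMeasure μ]
    (d N : ℕ) (z ε : ℕ → Ω → (Fin d → ℝ)) (z₀ : Fin d → ℝ) (E : Fin N → (Fin d → ℝ))
    (α : ℕ → ℝ) (w : ℕ → Fin N → ℝ)

-- representation of z t as affine function of the noises
lemma z_repr (hz0 : z 0 = fun _ => z₀)
    (hrec : ∀ t, 1 ≤ t → ∀ ω,
      z t ω = Real.sqrt (α t) • (z (t - 1) ω + ∑ i, w t i • E i)
        + Real.sqrt (1 - α t) • ε t ω) :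
    ∀ t, ∃ (m : Fin d → ℝ) (c : ℕ → ℝ),
      ∀ ω, z t ω = m + ∑ s ∈ Finset.Icc 1 t, c s • ε s ω := by
  intro t
  induction t with
  | zero =>
    refine ⟨z₀, fun _ => 0, fun ω => ?_⟩
    rw [hz0]
    simp
  | succ n ih =>
    obtain ⟨m, c, hm⟩ := ih
    set a := Real.sqrt (α (n+1))
    set b := Real.sqrt (1 - α (n+1))
    set K := ∑ i, w (n+1) i • E i
    refine ⟨a • (m + K), fun s => if s = n+1 then b else a * c s, fun ω => ?_⟩
    have hsum : ∑ s ∈ Finset.Icc 1 n, (if s = n+1 then b else a * c s) • ε s ω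
        = ∑ s ∈ Finset.Icc 1 n, (a * c s) • ε s ω := by
      refine Finset.sum_congr rfl fun s hs => ?_
      rw [if_neg (by simp at hs; omega)]
    rw [hrec (n+1) (by omega) ω]
    simp only [Nat.add_sub_cancel]
    rw [hm ω, Finset.sum_Icc_succ_top (by omega : 1 ≤ n+1), if_pos rfl, hsum]
    have key : a • (m + ∑ s ∈ Finset.Icc 1 n, c s • ε s ω + K)
        = a • (m + K) + ∑ s ∈ Finset.Icc 1 n, (a * c s) • ε s ω := by
      rw [smul_add, smul_add, smul_add, Finset.smul_sum]
      simp_rw [smul_smul]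
      abel
    rw [key, add_assoc]

lemma z_meas (hz0 : z 0 = fun _ => z₀)
    (hmeas : ∀ t, Measurable (ε t))
    (hrec : ∀ t, 1 ≤ t → ∀ ω,
      z t ω = Real.sqrt (α t) • (z (t - 1) ω + ∑ i, w t i • E i)
        + Real.sqrt (1 - α t) • ε t ω) :
    ∀ t, Measurable (z t) := by
  intro t
  obtain ⟨m, c, hm⟩ := z_repr d N z ε z₀ E α w hz0 hrec t
  have : z t = fun ω => m + ∑ s ∈ Finset.Icc 1 t, c s • ε s ω := funext hm
  rw [this]
  exact measurable_const.add (Finset.measurable_sum _ (fun s _ => (hmeas s).const_smul (c s)))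

lemma z_indep (hz0 : z 0 = fun _ => z₀)
    (hmeas : ∀ t, Measurable (ε t))
    (hiid : iIndepFun ε μ)
    (hrec : ∀ t, 1 ≤ t → ∀ ω,
      z t ω = Real.sqrt (α t) • (z (t - 1) ω + ∑ i, w t i • E i)
        + Real.sqrt (1 - α t) • ε t ω) :
    ∀ t, 1 ≤ t → IndepFun (z (t-1)) (ε t) μ := by
  intro t ht
  obtain ⟨m, c, hm⟩ := z_repr d N z ε z₀ E α w hz0 hrec (t-1)
  set G : ℕ → Ω → (Fin d → ℝ) :=
    fun s => (fun x : Fin d → ℝ => (if s = t then (1:ℝ) else c s) • x) ∘ ε s with hG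
  have hGindep : iIndepFun G μ :=
    hiid.comp _ (fun s => measurable_const_smul _)
  have hGmeas : ∀ s, Measurable (G s) := fun s => (measurable_const_smul _).comp (hmeas s)
  have hnm : t ∉ Finset.Icc 1 (t-1) := by simp; omega
  have hbase : IndepFun (∑ s ∈ Finset.Icc 1 (t-1), G s) (G t) μ :=
    hGindep.indepFun_finsetSum_of_notMem hGmeas hnm
  have hGt : G t = ε t := by
    funext ω
    simp [hG]
  have hzrepr : z (t-1) = (fun x => m + x) ∘ (∑ s ∈ Finset.Icc 1 (t-1), G s) := by
    funext ω
    simp only [Function.comp_apply, Finset.sum_apply]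
    rw [hm ω]
    congr 1
    refine Finset.sum_congr rfl fun s hs => ?_
    have hsne : s ≠ t := by simp at hs; omega
    simp [hG, hsne]
  have := hbase.comp (φ := fun x : Fin d → ℝ => m + x) (ψ := id)
    (measurable_const.add measurable_id) measurable_id
  rw [← hzrepr] at this
  rw [hGt] at this
  exact this
end main

/-- MT-Diffusion forward marginal with `N` modality encodings: under the transition
`z t = √(α t) • (z (t-1) + Σ_i w t i • E i) + √(1 - α t) • ε t` with i.i.d. standard
Gaussian noises, `z t | z 0, X ~ N(√(ᾱ t) • z₀ + Σ_i α̃ t i • E i, (1 - ᾱ t) I)`, where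
`ᾱ t = ∏_{i=1}^t α i`, `α̃ 0 i = 0` and `α̃ t i = √(α t) * (w t i + α̃ (t-1) i)`. -/
theorem mt_diffusion_forward_marginal_multimodal
    {Ω : Type*} [MeasurableSpace Ω] (μ : Measure Ω) [IsProbabilityMeasure μ]
    (d N : ℕ) (z ε : ℕ → Ω → (Fin d → ℝ)) (z₀ : Fin d → ℝ) (E : Fin N → (Fin d → ℝ))
    (α αbar : ℕ → ℝ) (w αtilde : ℕ → Fin N → ℝ)
    (hα : ∀ t, α t ∈ Set.Ioc (0 : ℝ) 1)
    (hαbar : ∀ t, αbar t = ∏ i ∈ Finset.Icc 1 t, α i)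
    (htilde0 : ∀ i, αtilde 0 i = 0)
    (htilde : ∀ t, 1 ≤ t → ∀ i, αtilde t i = Real.sqrt (α t) * (w t i + αtilde (t - 1) i))
    (hmeas : ∀ t, Measurable (ε t))
    (hiid : iIndepFun ε μ)
    (hlaw : ∀ t, μ.map (ε t) = gaussianVec d 0 1)
    (hz0 : z 0 = fun _ => z₀)
    (hrec : ∀ t, 1 ≤ t → ∀ ω,
      z t ω = Real.sqrt (α t) • (z (t - 1) ω + ∑ i, w t i • E i)
        + Real.sqrt (1 - α t) • ε t ω) :
    ∀ t, μ.map (z t)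
      = gaussianVec d (Real.sqrt (αbar t) • z₀ + ∑ i, αtilde t i • E i)
          (1 - αbar t).toNNReal := by
  have habar_pos : ∀ t, 0 < αbar t := fun t => by
    rw [hαbar]; exact Finset.prod_pos fun i _ => (hα i).1
  have habar_le : ∀ t, αbar t ≤ 1 := fun t => by
    rw [hαbar]
    exact Finset.prod_le_one (fun i _ => (hα i).1.le) (fun i _ => (hα i).2)
  have hzm : ∀ t, Measurable (z t) := z_meas d N z ε z₀ E α w hz0 hmeas hrec
  intro t
  induction t with
  | zero =>
    have h0 : αbar 0 = 1 := by rw [hαbar]; simp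
    have hmean : Real.sqrt (αbar 0) • z₀ + ∑ i, αtilde 0 i • E i = z₀ := by
      simp [h0, htilde0]
    rw [hz0, Measure.map_const, measure_univ, one_smul, hmean, h0]
    rw [show ((1:ℝ) - 1).toNNReal = 0 by simp]
    simp only [gaussianVec, gaussianReal_zero_var]
    exact (pi_dirac z₀).symm
  | succ n ihn =>
    set a := Real.sqrt (α (n+1)) with ha
    set b := Real.sqrt (1 - α (n+1)) with hb
    set C : Fin d → ℝ := a • ∑ i, w (n+1) i • E i with hC
    have hind : IndepFun (z n) (ε (n+1)) μ := by
      have := z_indep μ d N z ε z₀ E α w hz0 hmeas hiid hrec (n+1) (by omega)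
      simpa using this
    have hpair : μ.map (fun ω => (z n ω, ε (n+1) ω))
        = (μ.map (z n)).prod (μ.map (ε (n+1))) :=
      (indepFun_iff_map_prod_eq_prod_map_map (hzm n).aemeasurable
        (hmeas (n+1)).aemeasurable).mp hind
    have hfun : z (n+1)
        = (fun p : (Fin d → ℝ) × (Fin d → ℝ) => fun i => a * p.1 i + C i + b * p.2 i)
          ∘ (fun ω => (z n ω, ε (n+1) ω)) := by
      funext ω
      rw [hrec (n+1) (by omega) ω]
      simp only [Nat.add_sub_cancel]
      funext i
      simp only [Function.comp_apply, Pi.add_apply, Pi.smul_apply, smul_eq_mul, hC,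
        Finset.sum_apply]
      ring
    have htld : ∀ j, αtilde (n+1) j = a * (w (n+1) j + αtilde n j) := fun j => by
      have := htilde (n+1) (by omega) j
      simpa using this
    have hab : αbar (n+1) = αbar n * α (n+1) := by
      rw [hαbar, hαbar]
      exact Finset.prod_Icc_succ_top (by omega) α
    have hsb : Real.sqrt (αbar (n+1)) = Real.sqrt (αbar n) * a := by
      rw [hab, Real.sqrt_mul (habar_pos n).le]
    have hmean : (fun i => a * (Real.sqrt (αbar n) • z₀ + ∑ j, αtilde n j • E j) i + C i)
        = Real.sqrt (αbar (n+1)) • z₀ + ∑ j, αtilde (n+1) j • E j := by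
      funext i
      simp only [Pi.add_apply, Pi.smul_apply, smul_eq_mul, Finset.sum_apply, hC]
      simp_rw [htld]
      rw [hsb]
      have hsplit : ∑ j, (a * (w (n+1) j + αtilde n j)) * E j i
          = a * (∑ j, αtilde n j * E j i) + a * (∑ j, w (n+1) j * E j i) := by
        rw [Finset.mul_sum, Finset.mul_sum, ← Finset.sum_add_distrib]
        exact Finset.sum_congr rfl fun j _ => by ring
      rw [hsplit, Finset.mul_sum]
      ring
    rw [hfun, ← Measure.map_map (by fun_prop) ((hzm n).prodMk (hmeas (n+1))), hpair,
      ihn, hlaw, vecStep]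
    refine congrArg₂ (gaussianVec d) hmean ?_
    have hva : a^2 = α (n+1) := Real.sq_sqrt (hα (n+1)).1.le
    have hvb : b^2 = 1 - α (n+1) := Real.sq_sqrt (by linarith [(hα (n+1)).2])
    rw [← NNReal.coe_inj]
    change a^2 * ((1 - αbar n).toNNReal : ℝ) + b^2 = ((1 - αbar (n+1)).toNNReal : ℝ)
    rw [Real.coe_toNNReal _ (by linarith [habar_le n] : (0:ℝ) ≤ 1 - αbar n),
      Real.coe_toNNReal _ (by linarith [habar_le (n+1)] : (0:ℝ) ≤ 1 - αbar (n+1)),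
      hva, hvb, hab]
    ring
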